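/- Let k ⊆ l be number fields, let ω₁, …, ω_e be a k-basis of l contained in O_l, let 𝔐 ⊆ O_l be the full O_k-module they generate, and let E_{l/k}(𝔐) = {α ∈ O_𝔐^× : Norm_{l/k}(α) ∈ Tor(O_k^×)} be its group of relative units. For each nonzero β ∈ O_k, the solution set {μ ∈ 𝔐 : Norm_{l/k}(μ) ∈ Tor(O_k^×)·β} is a disjoint union of finitely many equivalence classes under the relation μ₁ ~ μ₂ iff γμ₁ = μ₂ for some γ ∈ E_{l/k}(𝔐); that is, the quotient of this solution set by the multiplication action of E_{l/k}(𝔐) is finite. -/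

import Mathlib

open NumberField Module

/-- The normalized logarithmic absolute value `log |x|_w` at an infinite place `w`
of a number field `F`, where `|·|_w = ‖·‖_w^{d_w/d}`. -/
noncomputable def infLogAbs (F : Type*) [Field F] [NumberField F]
    (w : InfinitePlace F) (x : F) : ℝ :=
  (w.mult : ℝ) / (finrank ℚ F : ℝ) * Real.log (w x)

/-- The normalized logarithmic absolute value `log |x|_v` at a finite place `v`
of a number field `F`. -/
noncomputable def finLogAbs (F : Type*) [Field F] [NumberField F]
    (v : IsDedekindDomain.HeightOneSpectrum (𝓞 F)) (x : F) : ℝ :=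
  if h : (v.valuation (K := F)) x = 0 then 0
  else ((Multiplicative.toAdd (WithZero.unzero h) : ℤ) : ℝ) / (finrank ℚ F : ℝ) *
    Real.log (Ideal.absNorm v.asIdeal)

/-- The absolute logarithmic Weil height `h(x) = ∑_w log⁺ |x|_w`, the sum running over
all (infinite and finite) places of the number field `F`. -/
noncomputable def weilHeight (F : Type*) [Field F] [NumberField F] (x : F) : ℝ :=
  (∑ w : InfinitePlace F, max 0 (infLogAbs F w x)) +
    ∑ᶠ v : IsDedekindDomain.HeightOneSpectrum (𝓞 F), max 0 (finLogAbs F v x)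

/-- The full `O_k`-module `𝔐` generated by elements `ω i` of `l`. -/
def fullModule (K : Type*) [Field K] [NumberField K] {L : Type*} [Field L]
    [Algebra K L] {e : ℕ} (ω : Fin e → L) : Set L :=
  {x | ∃ ν : Fin e → 𝓞 K, x = ∑ i, algebraMap K L (ν i : K) * ω i}

/-- The coefficient ring `O_𝔐 = {α ∈ l : α𝔐 ⊆ 𝔐}` of a full module `𝔐 ⊆ l`. -/
def coeffRing {L : Type*} [Field L] (M : Set L) : Set L :=
  {α | ∀ x ∈ M, α * x ∈ M}

/-- The unit group `O_𝔐^× = O_𝔐 ∩ O_l^×` of the coefficient ring. -/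
def coeffRingUnits {L : Type*} [Field L] [NumberField L] (M : Set L) : Set L :=
  {α | α ∈ coeffRing M ∧ ∃ u : (𝓞 L)ˣ, ((u : 𝓞 L) : L) = α}

/-- The group `E_{l/k}(𝔐) = {α ∈ O_𝔐^× : Norm_{l/k}(α) ∈ Tor(O_k^×)}` of relative units. -/
def relUnits (K : Type*) [Field K] [NumberField K] (L : Type*) [Field L] [NumberField L]
    [Algebra K L] (M : Set L) : Set L :=
  {α | α ∈ coeffRingUnits M ∧ ∃ n : ℕ, 0 < n ∧ (Algebra.norm K α) ^ n = 1}

/-- A family of elements of `Lˣ` is multiplicatively independent if no nontrivial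
integer-power product of them equals `1`. -/
def MulIndep {L : Type*} [Field L] {r : ℕ} (ε : Fin r → L) : Prop :=
  ∀ m : Fin r → ℤ, (∏ j, ε j ^ m j) = 1 → m = 0

open scoped Classical in
/-- The set of infinite places of `L` lying above an infinite place `v` of `K`. -/
noncomputable def placesAbove (K : Type*) [Field K] (L : Type*) [Field L] [NumberField L]
    [Algebra K L] (v : InfinitePlace K) : Finset (InfinitePlace L) :=
  Finset.univ.filter (fun w => w.comap (algebraMap K L) = v)
set_option linter.unusedSectionVars false

section AuxLemmas

variable {K : Type*} [Field K] [NumberField K] {L : Type*} [Field L] [NumberField L]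
  [Algebra K L] {e : ℕ}

lemma fullModule_add_mem {ω : Fin e → L} {x y : L}
    (hx : x ∈ fullModule K ω) (hy : y ∈ fullModule K ω) : x + y ∈ fullModule K ω := by
  obtain ⟨ν, rfl⟩ := hx; obtain ⟨ξ, rfl⟩ := hy
  refine ⟨fun i => ν i + ξ i, ?_⟩
  rw [← Finset.sum_add_distrib]
  refine Finset.sum_congr rfl fun i _ => ?_
  push_cast
  ring

lemma fullModule_smul_mem {ω : Fin e → L} (c : 𝓞 K) {x : L}
    (hx : x ∈ fullModule K ω) : algebraMap K L (c : K) * x ∈ fullModule K ω := by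
  obtain ⟨ν, rfl⟩ := hx
  refine ⟨fun i => c * ν i, ?_⟩
  rw [Finset.mul_sum]
  refine Finset.sum_congr rfl fun i _ => ?_
  push_cast
  ring

lemma fullModule_isIntegral {ω : Fin e → L} (hω : ∀ i, IsIntegral ℤ (ω i)) {x : L}
    (hx : x ∈ fullModule K ω) : IsIntegral ℤ x := by
  obtain ⟨ν, rfl⟩ := hx
  refine IsIntegral.sum _ fun i _ => IsIntegral.mul ?_ (hω i)
  exact ((ν i).2.map (IsScalarTower.toAlgHom ℤ K L))

end AuxLemmas
section AuxMult

variable {K : Type*} [Field K] [NumberField K] {L : Type*} [Field L] [NumberField L]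
  [Algebra K L] {e : ℕ}

lemma fullModule_zero_mem (ω : Fin e → L) : (0 : L) ∈ fullModule K ω :=
  ⟨0, by simp⟩

lemma exists_multiplier (b : Basis (Fin e) K L) :
    ∃ m : 𝓞 K, m ≠ 0 ∧
      ∀ y : 𝓞 L, algebraMap K L (m : K) * (y : L) ∈ fullModule K (fun i => b i) := by
  classical
  set ι := Module.Free.ChooseBasisIndex ℤ (𝓞 L)
  set B : Basis ι ℤ (𝓞 L) := Module.Free.chooseBasis ℤ (𝓞 L)
  set s : Finset K :=
    Finset.image (fun p : ι × Fin e => b.repr ((B p.1 : 𝓞 L) : L) p.2) Finset.univ with hs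
  obtain ⟨y, hy0, hys⟩ := exists_integral_multiples ℤ ℚ s
  refine ⟨(y : 𝓞 K), Int.cast_ne_zero.mpr hy0, ?_⟩
  have claim1 : ∀ j : ι, algebraMap K L (((y : 𝓞 K) : K)) * ((B j : 𝓞 L) : L)
      ∈ fullModule K (fun i => b i) := by
    intro j
    have hint : ∀ i : Fin e, IsIntegral ℤ ((y : K) * b.repr ((B j : 𝓞 L) : L) i) := by
      intro i
      have := hys (b.repr ((B j : 𝓞 L) : L) i)
        (Finset.mem_image.mpr ⟨(j, i), Finset.mem_univ _, rfl⟩)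
      rwa [zsmul_eq_mul] at this
    refine ⟨fun i => ⟨(y : K) * b.repr ((B j : 𝓞 L) : L) i, hint i⟩, ?_⟩
    conv_lhs => rw [show ((B j : 𝓞 L) : L) = ∑ i, b.repr ((B j : 𝓞 L) : L) i • b i from
      (b.sum_repr _).symm]
    rw [Finset.mul_sum]
    refine Finset.sum_congr rfl fun i _ => ?_
    rw [Algebra.smul_def]
    beta_reduce
    show algebraMap K L (((y : 𝓞 K) : K)) * (algebraMap K L (b.repr ((B j : 𝓞 L) : L) i) * b i)
        = algebraMap K L ((y : K) * b.repr ((B j : 𝓞 L) : L) i) * b i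
    rw [map_mul]
    push_cast [map_intCast]
    ring
  intro z
  have hz : (z : L) = ∑ j, (B.repr z j : ℤ) • ((B j : 𝓞 L) : L) := by
    conv_lhs => rw [show z = ∑ j, B.repr z j • B j from (B.sum_repr z).symm]
    push_cast
    rfl
  rw [hz, Finset.mul_sum]
  refine Finset.sum_induction _ (· ∈ fullModule K (fun i => b i))
    (fun a b ha hb => fullModule_add_mem ha hb) (fullModule_zero_mem _) (fun j _ => ?_)
  have : algebraMap K L (((y : 𝓞 K) : K)) * (B.repr z j : ℤ) • ((B j : 𝓞 L) : L)
      = algebraMap K L (((B.repr z j : 𝓞 K) : K)) *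
        (algebraMap K L (((y : 𝓞 K) : K)) * ((B j : 𝓞 L) : L)) := by
    rw [zsmul_eq_mul]
    push_cast [map_intCast]
    ring
  rw [this]
  exact fullModule_smul_mem _ (claim1 j)

end AuxMult
section MainAux

variable {K : Type*} [Field K] [NumberField K] {L : Type*} [Field L] [NumberField L]
  [Algebra K L]

lemma normZ_ne_zero {x : 𝓞 L} (hx : x ≠ 0) : Algebra.norm ℤ x ≠ 0 := by
  intro h
  have h1 : ((Algebra.norm ℤ x : ℤ) : ℚ) = Algebra.norm ℚ (x : L) := Algebra.coe_norm_int x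
  rw [h] at h1
  have h2 : (x : L) ≠ 0 := by
    rw [RingOfIntegers.coe_eq_algebraMap, ne_eq, RingOfIntegers.coe_eq_zero_iff]
    exact hx
  exact (Algebra.norm_ne_zero_iff (R := ℚ)).mpr h2 h1.symm

lemma rat_abs_eq_one_of_pow {q : ℚ} {n : ℕ} (hn : 0 < n) (hq : q ^ n = 1) : |q| = 1 := by
  have habs : |q| ^ n = 1 := by rw [← abs_pow, hq, abs_one]
  rcases lt_trichotomy |q| 1 with h | h | h
  · exact absurd habs (by simpa using (pow_lt_one₀ (abs_nonneg q) h hn.ne').ne)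
  · exact h
  · exact absurd habs (by simpa using (one_lt_pow₀ h hn.ne').ne')

end MainAux
set_option maxHeartbeats 1000000 in
set_option synthInstance.maxHeartbeats 400000 in

/-- **Finiteness of the number of equivalence classes.** For each nonzero `β ∈ O_k`, the
solution set `{μ ∈ 𝔐 : Norm_{l/k}(μ) ∈ Tor(O_k^×)·β}` is a disjoint union of finitely many
equivalence classes under `μ₁ ~ μ₂ ↔ ∃ γ ∈ E_{l/k}(𝔐), γμ₁ = μ₂`: there is a finite set of
solutions `T` such that every solution is equivalent to a member of `T`. -/
theorem solutions_finitely_many_classes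
    (K L : Type*) [Field K] [NumberField K] [Field L] [NumberField L] [Algebra K L]
    (e : ℕ) (he : e = finrank K L) (b : Basis (Fin e) K L)
    (hbInt : ∀ i, IsIntegral ℤ (b i))
    (M : Set L) (hM : M = fullModule K (fun i => b i))
    (β : K) (hβInt : IsIntegral ℤ β) (hβ : β ≠ 0)
    (S : Set L)
    (hS : S = {x ∈ M | ∃ ζ : K, (∃ n : ℕ, 0 < n ∧ ζ ^ n = 1) ∧
        Algebra.norm K x = ζ * β}) :
    ∃ T : Finset L, ↑T ⊆ S ∧
      ∀ μ ∈ S, ∃ μ' ∈ T, ∃ γ ∈ relUnits K L M, γ * μ = μ' := by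
  classical
  -- basic structure of `M` and `S`
  have hSsub : S ⊆ M := by rw [hS]; exact fun x hx => hx.1
  have hMint : ∀ x ∈ M, IsIntegral ℤ x := by
    rw [hM]; exact fun x hx => fullModule_isIntegral hbInt hx
  have hMadd : ∀ x ∈ M, ∀ y ∈ M, x + y ∈ M := by
    rw [hM]; exact fun x hx y hy => fullModule_add_mem hx hy
  have hMsmul : ∀ (c : 𝓞 K), ∀ x ∈ M, algebraMap K L (c : K) * x ∈ M := by
    rw [hM]; exact fun c x hx => fullModule_smul_mem c hx
  -- the finite-index multiplier `m`
  obtain ⟨m, hm0, hm⟩ := exists_multiplier b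
  rw [← hM] at hm
  have hmLint : IsIntegral ℤ (algebraMap K L (m : K)) :=
    (RingOfIntegers.isIntegral_coe m).map (IsScalarTower.toAlgHom ℤ K L)
  set mO : 𝓞 L := ⟨algebraMap K L (m : K), hmLint⟩ with hmOdef
  have hmO0 : mO ≠ 0 := by
    intro h
    apply hm0
    have h1 : algebraMap K L (m : K) = 0 := congrArg (fun z : 𝓞 L => (z : L)) h
    have h2 : (m : K) = 0 := (map_eq_zero (algebraMap K L)).mp h1
    exact_mod_cast h2
  set J : Ideal (𝓞 L) := Ideal.span {mO ^ 2} with hJdef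
  haveI hJfin : Finite ((𝓞 L) ⧸ J) := by
    rw [← Ideal.absNorm_ne_zero_iff, hJdef, Ideal.absNorm_span_singleton, ne_eq,
      Int.natAbs_eq_zero]
    exact normZ_ne_zero (pow_ne_zero 2 hmO0)
  haveI : Finite ((𝓞 L ⧸ J)ˣ) := inferInstance
  -- the embedding of solutions into `𝓞 L`
  set emb : L → 𝓞 L := fun x => if h : IsIntegral ℤ x then ⟨x, h⟩ else 0 with hembdef
  have hembS : ∀ x ∈ S, ((emb x : 𝓞 L) : L) = x := by
    intro x hx
    rw [hembdef]
    simp only [dif_pos (hMint x (hSsub hx))]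
    simp [hMint x (hSsub hx)]
    rfl
  -- the common ideal norm of solutions
  set c : ℕ := (Algebra.norm ℤ (⟨β, hβInt⟩ : 𝓞 K)).natAbs with hcdef
  have habs : ∀ μ ∈ S, Ideal.absNorm (Ideal.span {emb μ}) = c := by
    intro μ hμ
    have hμ' := hμ
    rw [hS] at hμ'
    obtain ⟨hμM, ζ, ⟨n, hn, hζn⟩, hNμ⟩ := hμ'
    rw [Ideal.absNorm_span_singleton, hcdef]
    have h1 : ((Algebra.norm ℤ (emb μ) : ℤ) : ℚ) = Algebra.norm ℚ μ := by
      rw [Algebra.coe_norm_int, hembS μ hμ]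
    have h2 : ((Algebra.norm ℤ (⟨β, hβInt⟩ : 𝓞 K) : ℤ) : ℚ) = Algebra.norm ℚ β :=
      Algebra.coe_norm_int _
    have h3 : Algebra.norm ℚ μ = Algebra.norm ℚ ζ * Algebra.norm ℚ β := by
      rw [← Algebra.norm_norm (R := ℚ) (S := K) (a := μ), hNμ, map_mul]
    have hq : (Algebra.norm ℚ ζ) ^ n = 1 := by rw [← map_pow, hζn, map_one]
    have habs1 : |Algebra.norm ℚ ζ| = 1 := rat_abs_eq_one_of_pow hn hq
    have h4 : |((Algebra.norm ℤ (emb μ) : ℤ) : ℚ)|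
        = |((Algebra.norm ℤ (⟨β, hβInt⟩ : 𝓞 K) : ℤ) : ℚ)| := by
      rw [h1, h2, h3, abs_mul, habs1, one_mul]
    rw [← Int.cast_abs, ← Int.cast_abs] at h4
    have h5 : |Algebra.norm ℤ (emb μ)| = |Algebra.norm ℤ (⟨β, hβInt⟩ : 𝓞 K)| :=
      Int.cast_injective h4
    calc (Algebra.norm ℤ (emb μ)).natAbs = |Algebra.norm ℤ (emb μ)|.natAbs := by
            rw [Int.natAbs_abs]
      _ = |Algebra.norm ℤ (⟨β, hβInt⟩ : 𝓞 K)|.natAbs := by rw [h5]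
      _ = (Algebra.norm ℤ (⟨β, hβInt⟩ : 𝓞 K)).natAbs := Int.natAbs_abs _
  have hIdFin : {I : Ideal (𝓞 L) | Ideal.absNorm I = c}.Finite :=
    Ideal.finite_setOf_absNorm_eq c
  -- choice of a base solution for each ideal
  set g : Ideal (𝓞 L) → L := fun I =>
    if h : ∃ x, x ∈ S ∧ Ideal.span {emb x} = I then h.choose else 0 with hgdef
  have hg : ∀ μ ∈ S, g (Ideal.span {emb μ}) ∈ S ∧
      Ideal.span {emb (g (Ideal.span {emb μ}))} = Ideal.span {emb μ} := by
    intro μ hμ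
    have hex : ∃ x, x ∈ S ∧ Ideal.span {emb x} = Ideal.span {emb μ} := ⟨μ, hμ, rfl⟩
    rw [hgdef]
    simp only [dif_pos hex]
    exact ⟨hex.choose_spec.1, hex.choose_spec.2⟩
  -- choice of the comparison unit
  set uF : L → (𝓞 L)ˣ := fun x =>
    if h : ∃ w : (𝓞 L)ˣ, emb (g (Ideal.span {emb x})) * (w : 𝓞 L) = emb x
    then h.choose else 1 with huFdef
  have hu : ∀ μ ∈ S, emb (g (Ideal.span {emb μ})) * ((uF μ : (𝓞 L)ˣ) : 𝓞 L) = emb μ := by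
    intro μ hμ
    obtain ⟨w, hw⟩ := Ideal.span_singleton_eq_span_singleton.mp ((hg μ hμ).2)
    have hex : ∃ w : (𝓞 L)ˣ, emb (g (Ideal.span {emb μ})) * (w : 𝓞 L) = emb μ := ⟨w, hw⟩
    rw [huFdef]
    simp only [dif_pos hex]
    exact hex.choose_spec
  -- the invariant
  set F : L → Ideal (𝓞 L) × ((𝓞 L ⧸ J)ˣ) := fun x =>
    (Ideal.span {emb x}, Units.map (Ideal.Quotient.mk J).toMonoidHom (uF x)) with hFdef
  -- the key step
  have key : ∀ μ ∈ S, ∀ ν ∈ S, F μ = F ν → ∃ γ ∈ relUnits K L M, γ * μ = ν := by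
    intro μ hμ ν hν hF
    have hI : Ideal.span {emb μ} = Ideal.span {emb ν} := congrArg Prod.fst hF
    have hUimg : Units.map (Ideal.Quotient.mk J).toMonoidHom (uF μ)
        = Units.map (Ideal.Quotient.mk J).toMonoidHom (uF ν) := congrArg Prod.snd hF
    set w : (𝓞 L)ˣ := uF ν * (uF μ)⁻¹ with hwdef
    have huμ := hu μ hμ
    have huν := hu ν hν
    rw [hI] at huμ
    have hwμ : (w : 𝓞 L) * emb μ = emb ν := by
      have hstep : (w : 𝓞 L) * (emb (g (Ideal.span {emb ν})) * (uF μ : 𝓞 L))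
          = emb (g (Ideal.span {emb ν})) * (uF ν : 𝓞 L) := by
        calc (w : 𝓞 L) * (emb (g (Ideal.span {emb ν})) * (uF μ : 𝓞 L))
            = emb (g (Ideal.span {emb ν})) * (uF ν : 𝓞 L)
              * (((uF μ)⁻¹ : (𝓞 L)ˣ) * (uF μ : 𝓞 L)) := by
              rw [hwdef, Units.val_mul]; ring
          _ = emb (g (Ideal.span {emb ν})) * (uF ν : 𝓞 L) := by
              rw [Units.inv_mul, mul_one]
      rw [huμ, huν] at hstep
      exact hstep
    have hγμν : ((w : 𝓞 L) : L) * μ = ν := by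
      have h1 := congrArg (fun z : 𝓞 L => (z : L)) hwμ
      simp only [RingOfIntegers.coe_eq_algebraMap, map_mul] at h1
      rw [← RingOfIntegers.coe_eq_algebraMap, ← RingOfIntegers.coe_eq_algebraMap,
        ← RingOfIntegers.coe_eq_algebraMap, hembS μ hμ, hembS ν hν] at h1
      exact h1
    -- congruence modulo J
    have hqμν : Ideal.Quotient.mk J ((uF μ : 𝓞 L)) = Ideal.Quotient.mk J ((uF ν : 𝓞 L)) := by
      have h := congrArg Units.val hUimg
      rw [Units.coe_map, Units.coe_map] at h
      exact h
    have hqw : Ideal.Quotient.mk J ((w : 𝓞 L)) = 1 := by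
      rw [hwdef, Units.val_mul, map_mul, ← hqμν, ← map_mul, Units.mul_inv, map_one]
    have hmem : (w : 𝓞 L) - 1 ∈ J := by
      rw [← Ideal.Quotient.eq_zero_iff_mem, map_sub, hqw, map_one, sub_self]
    rw [hJdef] at hmem
    obtain ⟨t, ht⟩ := Ideal.mem_span_singleton.mp hmem
    refine ⟨((w : 𝓞 L) : L), ⟨⟨?_, ⟨w, rfl⟩⟩, ?_⟩, hγμν⟩
    · -- γ ∈ coeffRing M
      intro x hx
      have hxint := hMint x hx
      set xO : 𝓞 L := ⟨x, hxint⟩ with hxOdef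
      have e2 := congrArg (fun z : 𝓞 L => algebraMap (𝓞 L) L z) ht
      simp only [map_sub, map_mul, map_pow, map_one] at e2
      have e3 : algebraMap (𝓞 L) L (t * xO) = algebraMap (𝓞 L) L t * x := by
        rw [map_mul]; rfl
      have e1 : ((w : 𝓞 L) : L) * x
          = x + algebraMap K L (m : K)
            * (algebraMap K L (m : K) * ((t * xO : 𝓞 L) : L)) := by
        have hmoc : (algebraMap (𝓞 L) L) mO = algebraMap K L (m : K) := rfl
        rw [hmoc] at e2
        show algebraMap (𝓞 L) L (w : 𝓞 L) * x
          = x + algebraMap K L (m : K)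
            * (algebraMap K L (m : K) * algebraMap (𝓞 L) L (t * xO))
        rw [e3]
        linear_combination x * e2
      rw [e1]
      exact hMadd x hx _ (hMsmul m _ (hm (t * xO)))
    · -- norm condition
      have hμ' := hμ; rw [hS] at hμ'
      have hν' := hν; rw [hS] at hν'
      obtain ⟨hμM, ζ, ⟨n, hn, hζn⟩, hNμ⟩ := hμ'
      obtain ⟨hνM, ζ', ⟨n', hn', hζn'⟩, hNν⟩ := hν'
      have hζ0 : ζ ≠ 0 := by
        intro h; rw [h, zero_pow hn.ne'] at hζn; exact zero_ne_one hζn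
      have hNμν : Algebra.norm K ν = Algebra.norm K (((w : 𝓞 L) : L)) * Algebra.norm K μ := by
        rw [← map_mul, hγμν]
      rw [hNμ, hNν] at hNμν
      have hNw : Algebra.norm K (((w : 𝓞 L) : L)) = ζ' * ζ⁻¹ := by
        have hc : (ζ' * ζ⁻¹) * (ζ * β) = ζ' * β := by field_simp
        exact mul_right_cancel₀ (mul_ne_zero hζ0 hβ) (by rw [hc, hNμν])
      refine ⟨n * n', Nat.mul_pos hn hn', ?_⟩
      have h1 : ζ' ^ (n * n') = 1 := by rw [mul_comm, pow_mul, hζn', one_pow]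
      have h2 : ζ ^ (n * n') = 1 := by rw [pow_mul, hζn, one_pow]
      rw [hNw, mul_pow, inv_pow, h1, h2, inv_one, mul_one]
  -- conclusion
  have hV : (F '' S).Finite := by
    refine Set.Finite.subset (hIdFin.prod (Set.finite_univ (α := (𝓞 L ⧸ J)ˣ))) ?_
    rintro _ ⟨μ, hμ, rfl⟩
    exact ⟨habs μ hμ, trivial⟩
  set sec : Ideal (𝓞 L) × ((𝓞 L ⧸ J)ˣ) → L := fun v =>
    if h : ∃ x, x ∈ S ∧ F x = v then h.choose else 0 with hsecdef
  have hsec : ∀ μ ∈ S, sec (F μ) ∈ S ∧ F (sec (F μ)) = F μ := by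
    intro μ hμ
    have hex : ∃ x, x ∈ S ∧ F x = F μ := ⟨μ, hμ, rfl⟩
    rw [hsecdef]
    simp only [dif_pos hex]
    exact hex.choose_spec
  refine ⟨hV.toFinset.image sec, ?_, ?_⟩
  · intro x hx
    simp only [Finset.coe_image, Set.mem_image, Set.Finite.coe_toFinset] at hx
    obtain ⟨v, hv, rfl⟩ := hx
    obtain ⟨μ, hμ, rfl⟩ := hv
    exact (hsec μ hμ).1
  · intro μ hμ
    refine ⟨sec (F μ), ?_, ?_⟩
    · exact Finset.mem_image.mpr ⟨F μ, (Set.Finite.mem_toFinset _).mpr ⟨μ, hμ, rfl⟩, rfl⟩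
    · exact key μ hμ _ (hsec μ hμ).1 ((hsec μ hμ).2).symm
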